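/- Let K be a compact subset of the unit sphere S²ⁿ⁻¹ ⊂ ℂⁿ containing no complete Hopf circle. Then every point x with π(x) ∈ π(K) admits a neighborhood B of π(x) in ℂPⁿ⁻¹, a continuous local section s : B → S²ⁿ⁻¹ of the Hopf projection π, and ε > 0 such that for all x̃ ∈ B the open Hopf-flow arc {e^{it}·s(x̃) : t ∈ (−ε, ε)} is disjoint from K. -/

import Mathlib

/-- The quotient topology on the projectivization `ℂPⁿ` of `ℂ^{n+1}`. -/
noncomputable instance (n : ℕ) : TopologicalSpace (Projectivization ℂ (EuclideanSpace ℂ (Fin n))) :=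
  inferInstanceAs (TopologicalSpace (Quotient _))

namespace Stmt3Aux

variable {m : ℕ}

abbrev E (m : ℕ) := EuclideanSpace ℂ (Fin m)

/-- Local affine section of the projectivization. -/
noncomputable def gsec (f : E m →L[ℂ] ℂ) (p : Projectivization ℂ (E m)) : E m :=
  (f p.rep)⁻¹ • p.rep

lemma gsec_mk (f : E m →L[ℂ] ℂ) (v : E m) (hv : v ≠ 0) :
    gsec f (Projectivization.mk ℂ v hv) = (f v)⁻¹ • v := by
  obtain ⟨a, ha⟩ := Projectivization.exists_smul_eq_mk_rep ℂ v hv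
  unfold gsec
  rw [← ha]
  have hfa : f ((a : ℂ) • v) = (a : ℂ) * f v := by simp
  rw [Units.smul_def, hfa, mul_inv, smul_smul]
  congr 1
  rw [mul_comm ((a : ℂ))⁻¹, mul_assoc, inv_mul_cancel₀ a.ne_zero, mul_one]

lemma frep_ne (f : E m →L[ℂ] ℂ) (v : E m) (hv : v ≠ 0) (hfv : f v ≠ 0) :
    f (Projectivization.mk ℂ v hv).rep ≠ 0 := by
  obtain ⟨a, ha⟩ := Projectivization.exists_smul_eq_mk_rep ℂ v hv
  rw [← ha, Units.smul_def]
  simpa using mul_ne_zero a.ne_zero hfv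

lemma isOpen_iff {m : ℕ} (S : Set (Projectivization ℂ (E m))) :
    IsOpen S ↔ IsOpen ((fun v : {v : E m // v ≠ 0} =>
      Projectivization.mk ℂ v.1 v.2) ⁻¹' S) :=
  isOpen_coinduced

lemma gsec_ne (f : E m →L[ℂ] ℂ) (p : Projectivization ℂ (E m))
    (hp : f p.rep ≠ 0) : gsec f p ≠ 0 := by
  unfold gsec
  exact smul_ne_zero (inv_ne_zero hp) p.rep_nonzero

lemma mk_gsec (f : E m →L[ℂ] ℂ) (p : Projectivization ℂ (E m))
    (hp : f p.rep ≠ 0) :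
    Projectivization.mk ℂ (gsec f p) (gsec_ne f p hp) = p := by
  conv_rhs => rw [← p.mk_rep]
  rw [Projectivization.mk_eq_mk_iff]
  exact ⟨Units.mk0 _ (inv_ne_zero hp), rfl⟩

/-- The basic open set where the section is defined. -/
def B0 (f : E m →L[ℂ] ℂ) : Set (Projectivization ℂ (E m)) :=
  {p | f p.rep ≠ 0}

lemma mem_B0_mk (f : E m →L[ℂ] ℂ) (v : E m) (hv : v ≠ 0) :
    Projectivization.mk ℂ v hv ∈ B0 f ↔ f v ≠ 0 := by
  constructor
  · intro h
    obtain ⟨a, ha⟩ := Projectivization.exists_smul_eq_mk_rep ℂ v hv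
    intro hfv
    apply h
    rw [← ha, Units.smul_def]
    simp [hfv]
  · exact frep_ne f v hv

lemma isOpen_B0 (f : E m →L[ℂ] ℂ) : IsOpen (B0 f) := by
  rw [isOpen_iff]
  have : ((fun v : {v : E m // v ≠ 0} => Projectivization.mk ℂ v.1 v.2) ⁻¹' B0 f)
      = {v : {v : E m // v ≠ 0} | f v.1 ≠ 0} := by
    ext v
    exact mem_B0_mk f v.1 v.2
  rw [this]
  exact isOpen_compl_iff.mpr (IsClosed.preimage (f.continuous.comp continuous_subtype_val)
    isClosed_singleton)

lemma continuousOn_gsec (f : E m →L[ℂ] ℂ) : ContinuousOn (gsec f) (B0 f) := by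
  rw [continuousOn_iff']
  intro t ht
  refine ⟨gsec f ⁻¹' t ∩ B0 f, ?_, (Set.inter_eq_self_of_subset_left Set.inter_subset_right).symm ▸ rfl⟩
  rw [isOpen_iff]
  have hset : ((fun v : {v : E m // v ≠ 0} => Projectivization.mk ℂ v.1 v.2) ⁻¹'
      (gsec f ⁻¹' t ∩ B0 f)) =
      {v : {v : E m // v ≠ 0} | f v.1 ≠ 0} ∩ (fun v : {v : E m // v ≠ 0} => (f v.1)⁻¹ • v.1) ⁻¹' t := by
    ext v
    simp only [Set.mem_preimage, Set.mem_inter_iff, Set.mem_setOf_eq]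
    rw [gsec_mk f v.1 v.2, mem_B0_mk f v.1 v.2]
    exact and_comm
  rw [hset]
  have hA : IsOpen {v : {v : E m // v ≠ 0} | f v.1 ≠ 0} :=
    isOpen_compl_iff.mpr (IsClosed.preimage (f.continuous.comp continuous_subtype_val)
      isClosed_singleton)
  have hcont : ContinuousOn (fun v : {v : E m // v ≠ 0} => (f v.1)⁻¹ • v.1)
      {v : {v : E m // v ≠ 0} | f v.1 ≠ 0} := by
    apply ContinuousOn.fun_smul
    · exact ContinuousOn.inv₀ (f.continuous.comp continuous_subtype_val).continuousOn
        fun v hv => hv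
    · exact continuous_subtype_val.continuousOn
  exact hcont.isOpen_inter_preimage hA ht

end Stmt3Aux


/-- Local sections with a uniform Hopf-flow gap.  If `K` is a compact subset of the
unit sphere `S^{2n+1} ⊂ ℂ^{n+1}` containing no complete Hopf circle, then every
point `x` of the sphere whose Hopf class lies in `π(K)` admits an open
neighbourhood `B` of `π(x)` in `ℂPⁿ`, a continuous local section `s` of the Hopf
projection over `B`, and `ε > 0` such that for all `p ∈ B` the open arc
`{e^{it}·s(p) : |t| < ε}` is disjoint from `K`. -/
theorem stmt3 (n : ℕ) (K : Set (EuclideanSpace ℂ (Fin (n + 1))))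
    (hK : IsCompact K) (hKs : K ⊆ Metric.sphere 0 1)
    (hnoc : ∀ y ∈ K, ∃ t : ℝ, Complex.exp (t * Complex.I) • y ∉ K)
    (x : EuclideanSpace ℂ (Fin (n + 1))) (hx : ‖x‖ = 1) (hx0 : x ≠ 0)
    (hxK : ∃ y ∈ K, ∃ c : ℂ, ‖c‖ = 1 ∧ y = c • x) :
    ∃ (B : Set (Projectivization ℂ (EuclideanSpace ℂ (Fin (n + 1)))))
      (s : Projectivization ℂ (EuclideanSpace ℂ (Fin (n + 1))) →
        EuclideanSpace ℂ (Fin (n + 1))) (ε : ℝ),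
      0 < ε ∧ IsOpen B ∧ Projectivization.mk ℂ x hx0 ∈ B ∧ ContinuousOn s B ∧
      (∀ p ∈ B, ∃ hp : s p ≠ 0, ‖s p‖ = 1 ∧ Projectivization.mk ℂ (s p) hp = p) ∧
      ∀ p ∈ B, ∀ t : ℝ, |t| < ε → Complex.exp (t * Complex.I) • s p ∉ K := by

  classical
  obtain ⟨y, hyK, c, hc, hyx⟩ := hxK
  obtain ⟨t₀, ht₀⟩ := hnoc y hyK
  set c₀ : ℂ := Complex.exp (↑t₀ * Complex.I) * c with hc₀def
  have hc₀ : ‖c₀‖ = 1 := by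
    rw [hc₀def, norm_mul, hc, mul_one, Complex.norm_exp_ofReal_mul_I]
  have hz : c₀ • x ∉ K := by
    rw [hc₀def, mul_smul, ← hyx]; exact ht₀
  set z : EuclideanSpace ℂ (Fin (n + 1)) := c₀ • x with hzdef
  -- δ-ball around z misses K
  obtain ⟨δ, hδpos, hball⟩ := Metric.isOpen_iff.mp hK.isClosed.isOpen_compl z hz
  -- the linear functional
  set f : EuclideanSpace ℂ (Fin (n + 1)) →L[ℂ] ℂ := innerSL ℂ x with hfdef
  have hfx : f x = 1 := by
    simp [hfdef, inner_self_eq_norm_sq_to_K, hx]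
  -- the section
  set g := Stmt3Aux.gsec f with hgdef
  set s : Projectivization ℂ (EuclideanSpace ℂ (Fin (n + 1))) →
      EuclideanSpace ℂ (Fin (n + 1)) := fun p => c₀ • (‖g p‖⁻¹ : ℝ) • g p with hsdef
  have hc₀ne : c₀ ≠ 0 := by
    intro h; rw [h, norm_zero] at hc₀; exact one_ne_zero hc₀.symm
  have hcontt : ContinuousOn s (Stmt3Aux.B0 f) := by
    apply ContinuousOn.fun_smul continuousOn_const
    apply ContinuousOn.fun_smul
    · exact ContinuousOn.inv₀ ((Stmt3Aux.continuousOn_gsec f).norm)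
        (fun p hp => norm_ne_zero_iff.mpr (Stmt3Aux.gsec_ne f p hp))
    · exact Stmt3Aux.continuousOn_gsec f
  have hp₀ : Projectivization.mk ℂ x hx0 ∈ Stmt3Aux.B0 f := by
    rw [Stmt3Aux.mem_B0_mk, hfx]; exact one_ne_zero
  have hsx : s (Projectivization.mk ℂ x hx0) = z := by
    have hgx : g (Projectivization.mk ℂ x hx0) = x := by
      rw [hgdef, Stmt3Aux.gsec_mk, hfx, inv_one, one_smul]
    rw [hsdef]
    simp only [hgx, hx, inv_one, one_smul]
    exact hzdef.symm
  -- the section properties on B0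
  have hkey : ∀ p ∈ Stmt3Aux.B0 f,
      ∃ hp : s p ≠ 0, ‖s p‖ = 1 ∧ Projectivization.mk ℂ (s p) hp = p := by
    intro p hp
    have hgne : g p ≠ 0 := Stmt3Aux.gsec_ne f p hp
    have hrne : ‖g p‖ ≠ 0 := norm_ne_zero_iff.mpr hgne
    have hsval : s p = (c₀ * ((‖g p‖ : ℂ))⁻¹) • g p := by
      rw [hsdef]
      simp only [mul_smul]
      congr 1
      rw [← Complex.coe_smul, Complex.ofReal_inv]
    have cc_ne : c₀ * ((‖g p‖ : ℂ))⁻¹ ≠ 0 :=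
      mul_ne_zero hc₀ne (inv_ne_zero (by exact_mod_cast hrne))
    have hp' : s p ≠ 0 := by rw [hsval]; exact smul_ne_zero cc_ne hgne
    refine ⟨hp', ?_, ?_⟩
    · rw [hsdef]
      simp only [norm_smul, hc₀, one_mul, norm_inv, norm_norm]
      exact inv_mul_cancel₀ hrne
    · conv_rhs => rw [← Stmt3Aux.mk_gsec f p hp]
      rw [Projectivization.mk_eq_mk_iff]
      exact ⟨Units.mk0 _ cc_ne, by rw [Units.smul_def, Units.val_mk0]; exact hsval.symm⟩
  -- shrink by continuity
  have hball2 : Metric.ball z (δ / 2) ∈ nhds (s (Projectivization.mk ℂ x hx0)) := by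
    rw [hsx]; exact Metric.ball_mem_nhds _ (by positivity)
  have hnb : s ⁻¹' Metric.ball z (δ / 2) ∈ nhds (Projectivization.mk ℂ x hx0) :=
    ((hcontt _ hp₀).continuousAt ((Stmt3Aux.isOpen_B0 f).mem_nhds hp₀)).preimage_mem_nhds hball2
  obtain ⟨V, hVsub, hVopen, hVmem⟩ := mem_nhds_iff.mp hnb
  refine ⟨Stmt3Aux.B0 f ∩ V, s, min 1 (δ / 8), ?_, ?_, ⟨hp₀, hVmem⟩, ?_, ?_, ?_⟩
  · exact lt_min one_pos (by positivity)
  · exact (Stmt3Aux.isOpen_B0 f).inter hVopen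
  · exact hcontt.mono Set.inter_subset_left
  · exact fun p hp => hkey p hp.1
  · intro p hp t ht hmem
    obtain ⟨hp', hnorm, _⟩ := hkey p hp.1
    have hdist1 : dist (s p) z < δ / 2 := by
      have := hVsub hp.2
      rwa [Set.mem_preimage, Metric.mem_ball] at this
    have ht1 : |t| ≤ 1 := le_of_lt (lt_of_lt_of_le ht (min_le_left _ _))
    have ht8 : |t| < δ / 8 := lt_of_lt_of_le ht (min_le_right _ _)
    have habs : ‖Complex.exp (↑t * Complex.I) - 1‖ ≤ 2 * |t| := by
      have h1 : ‖(↑t * Complex.I : ℂ)‖ ≤ 1 := by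
        simpa using ht1
      have := Complex.norm_exp_sub_one_le h1
      simpa using this
    have hdist2 : dist (Complex.exp (↑t * Complex.I) • s p) (s p) < δ / 4 := by
      have hsub : Complex.exp (↑t * Complex.I) • s p - s p
          = (Complex.exp (↑t * Complex.I) - 1) • s p := by
        rw [sub_smul, one_smul]
      rw [dist_eq_norm, hsub, norm_smul, hnorm, mul_one]
      calc ‖Complex.exp (↑t * Complex.I) - 1‖ ≤ 2 * |t| := habs
        _ < 2 * (δ / 8) := by linarith
        _ = δ / 4 := by ring
    have : Complex.exp (↑t * Complex.I) • s p ∈ Metric.ball z δ := by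
      rw [Metric.mem_ball]
      calc dist (Complex.exp (↑t * Complex.I) • s p) z
          ≤ dist (Complex.exp (↑t * Complex.I) • s p) (s p) + dist (s p) z := dist_triangle _ _ _
        _ < δ / 4 + δ / 2 := by linarith
        _ ≤ δ := by linarith
    exact hball this hmem
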